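/- For every natural number k, the function h_k(x) = e^{x^2/2} (-1)^k (d^k/dx^k) e^{-x^2} satisfies the Hermite differential equation -h_k''(x) + x^2 h_k(x) = (2k+1) h_k(x) for all real x. -/

import Mathlib

open Real
open scoped ContDiff

noncomputable def gaussFun : ℝ → ℝ := fun y => Real.exp (-y ^ 2)

lemma gauss_smooth : ContDiff ℝ ∞ gaussFun :=
  Real.contDiff_exp.comp (contDiff_id.pow 2).neg

lemma gk_smooth (n : ℕ) : ContDiff ℝ ∞ (iteratedDeriv n gaussFun) := by
  rw [iteratedDeriv_eq_iterate]
  exact gauss_smooth.iterate_deriv n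

lemma gk_diff (n : ℕ) : Differentiable ℝ (iteratedDeriv n gaussFun) :=
  (gk_smooth n).differentiable (by simp)

lemma deriv_gauss (x : ℝ) : deriv gaussFun x = -2 * x * gaussFun x := by
  have h : HasDerivAt gaussFun ((-(2*x)) * Real.exp (-x^2)) x := by
    have h1 : HasDerivAt (fun y : ℝ => -y ^ 2) (-(2*x)) x := by
      exact (hasDerivAt_pow 2 x).neg.congr_deriv (by norm_num)
    have := h1.exp
    convert this using 1
    show -(2 * x) * Real.exp (-x ^ 2) = Real.exp (-x ^ 2) * -(2 * x)
    ring
    rfl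
  rw [h.deriv]
  show -(2 * x) * Real.exp (-x ^ 2) = -2 * x * Real.exp (-x ^ 2)
  ring

lemma gk_rec : ∀ (k : ℕ) (x : ℝ), iteratedDeriv (k + 2) gaussFun x
    = -2 * x * iteratedDeriv (k + 1) gaussFun x
      - 2 * (k + 1) * iteratedDeriv k gaussFun x := by
  intro k
  induction k with
  | zero =>
    intro x
    have h1 : iteratedDeriv 1 gaussFun = fun x => -2 * x * gaussFun x := by
      funext y; rw [iteratedDeriv_one]; exact deriv_gauss y
    have hd : HasDerivAt (fun x : ℝ => -2 * x * gaussFun x)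
        (-2 * gaussFun x + -2 * x * deriv gaussFun x) x := by
      exact (((hasDerivAt_id x).const_mul (-2:ℝ)).mul
        ((gauss_smooth.differentiable (by simp) x).hasDerivAt)).congr_deriv (by simp)
    rw [iteratedDeriv_succ]
    conv_lhs => rw [h1]
    rw [hd.deriv, deriv_gauss, h1, iteratedDeriv_zero]
    push_cast; ring
  | succ k ih =>
    intro x
    have h1 : iteratedDeriv (k + 3) gaussFun = deriv (iteratedDeriv (k + 2) gaussFun) := by
      rw [iteratedDeriv_succ]
    have h2 : iteratedDeriv (k + 2) gaussFun = fun x =>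
        -2 * x * iteratedDeriv (k + 1) gaussFun x
          - 2 * (k + 1) * iteratedDeriv k gaussFun x := funext ih
    have hd : HasDerivAt (fun x : ℝ =>
        -2 * x * iteratedDeriv (k + 1) gaussFun x
          - 2 * (k + 1) * iteratedDeriv k gaussFun x)
        ((-2 * iteratedDeriv (k + 1) gaussFun x
            + -2 * x * deriv (iteratedDeriv (k + 1) gaussFun) x)
          - 2 * (k + 1) * deriv (iteratedDeriv k gaussFun) x) x := by
      exact ((((hasDerivAt_id x).const_mul (-2:ℝ)).mul
        ((gk_diff (k+1) x).hasDerivAt)).sub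
        (((gk_diff k x).hasDerivAt).const_mul (2 * ((k:ℝ) + 1)))).congr_deriv (by simp)
    show iteratedDeriv (k + 1 + 2) gaussFun x = _
    rw [show k + 1 + 2 = k + 3 from rfl, h1]
    conv_lhs => rw [h2]
    rw [hd.deriv, ← iteratedDeriv_succ, ← iteratedDeriv_succ]
    push_cast
    ring

/-- The Hermite function `h_k(x) = e^{x²/2} (-1)^k (d/dx)^k e^{-x²}`. -/
noncomputable def hermiteFun (k : ℕ) (x : ℝ) : ℝ :=
  Real.exp (x ^ 2 / 2) * (-1 : ℝ) ^ k * iteratedDeriv k (fun y => Real.exp (-y ^ 2)) x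

lemma expsq_deriv (x : ℝ) : HasDerivAt (fun x : ℝ => Real.exp (x ^ 2 / 2))
    (x * Real.exp (x ^ 2 / 2)) x := by
  have h1 : HasDerivAt (fun y : ℝ => y ^ 2 / 2) x x := by
    simpa using ((hasDerivAt_pow 2 x).div_const 2)
  simpa [mul_comm] using h1.exp

lemma hermiteFun_deriv (k : ℕ) (x : ℝ) :
    deriv (hermiteFun k) x = Real.exp (x ^ 2 / 2) * (-1 : ℝ) ^ k *
      (x * iteratedDeriv k gaussFun x + iteratedDeriv (k + 1) gaussFun x) := by
  have hd : HasDerivAt (hermiteFun k)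
      ((x * Real.exp (x ^ 2 / 2) * (-1:ℝ)^k) * iteratedDeriv k gaussFun x
        + (Real.exp (x ^ 2 / 2) * (-1:ℝ)^k) * deriv (iteratedDeriv k gaussFun) x) x := by
    have := ((expsq_deriv x).mul_const ((-1:ℝ)^k)).mul ((gk_diff k x).hasDerivAt)
    exact this
  rw [hd.deriv, ← iteratedDeriv_succ]
  ring

/-- the Hermite function satisfies `-h_k'' + x² h_k = (2k+1) h_k`. -/
theorem hermiteFun_eigen (k : ℕ) (x : ℝ) :
    -(deriv (deriv (hermiteFun k)) x) + x ^ 2 * hermiteFun k x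
      = (2 * k + 1 : ℝ) * hermiteFun k x := by
  have hd2 : deriv (deriv (hermiteFun k)) x
      = Real.exp (x ^ 2 / 2) * (-1 : ℝ) ^ k *
        (x * (x * iteratedDeriv k gaussFun x + iteratedDeriv (k + 1) gaussFun x)
          + (iteratedDeriv k gaussFun x + x * iteratedDeriv (k + 1) gaussFun x
            + iteratedDeriv (k + 2) gaussFun x)) := by
    have h1 : deriv (hermiteFun k) = fun x => Real.exp (x ^ 2 / 2) * (-1 : ℝ) ^ k *
        (x * iteratedDeriv k gaussFun x + iteratedDeriv (k + 1) gaussFun x) :=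
      funext (hermiteFun_deriv k)
    rw [h1]
    have hd : HasDerivAt (fun x : ℝ => Real.exp (x ^ 2 / 2) * (-1 : ℝ) ^ k *
        (x * iteratedDeriv k gaussFun x + iteratedDeriv (k + 1) gaussFun x))
        ((x * Real.exp (x ^ 2 / 2) * (-1:ℝ)^k) *
            (x * iteratedDeriv k gaussFun x + iteratedDeriv (k + 1) gaussFun x)
          + (Real.exp (x ^ 2 / 2) * (-1:ℝ)^k) *
            ((1 * iteratedDeriv k gaussFun x + x * deriv (iteratedDeriv k gaussFun) x)
              + deriv (iteratedDeriv (k+1) gaussFun) x)) x := by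
      exact ((expsq_deriv x).mul_const ((-1:ℝ)^k)).mul
        (((hasDerivAt_id x).mul ((gk_diff k x).hasDerivAt)).add
          ((gk_diff (k+1) x).hasDerivAt))
    rw [hd.deriv, ← iteratedDeriv_succ, ← iteratedDeriv_succ]
    ring
  have hrec := gk_rec k x
  have hfun : hermiteFun k x = Real.exp (x ^ 2 / 2) * (-1 : ℝ) ^ k *
      iteratedDeriv k gaussFun x := rfl
  rw [hd2, hfun, hrec]
  ring
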